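/- Let $d, \lambda_0, \lambda_1, \lambda_2 \in 2^{\mathbb{Z}}$ and suppose $(\tau, \xi), (\tau', \eta) \in \mathbb{R}^{1+n}$ satisfy $|\xi| \approx \lambda_1$, $|\eta| \approx \lambda_2$, $|\xi + \eta| \approx \lambda_0$, $||\tau| - |\xi|| \ll d$, $||\tau'| - |\eta|| \ll d$, and $||\tau + \tau'| - |\xi + \eta|| \approx d$. If $d \gg \min\{\lambda_0, \lambda_1, \lambda_2\}$, then necessarily $\mathrm{sgn}(\tau) = \mathrm{sgn}(\tau')$, $\angle(\xi, \eta) \approx 1$, $d \approx \max\{\lambda_0, \lambda_1, \lambda_2\}$, and $\lambda_0 \ll \lambda_1 \approx \lambda_2$. -/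

import Mathlib

open InnerProductGeometry

set_option maxHeartbeats 1000000 in
/-- (Resonance bound, high modulation case.) There is a constant `C ≥ 1`
such that for all dyadic `d, λ₀, λ₁, λ₂` and all `(τ, ξ), (τ', η)` with `|ξ| ≈ λ₁`,
`|η| ≈ λ₂`, `|ξ+η| ≈ λ₀`, `||τ|-|ξ|| ≪ d`, `||τ'|-|η|| ≪ d`, `||τ+τ'|-|ξ+η|| ≈ d`, and
`d ≫ min{λ₀,λ₁,λ₂}`, one necessarily has `sgn τ = sgn τ'`, `∠(ξ,η) ≈ 1`,
`d ≈ max{λ₀,λ₁,λ₂}`, and `λ₀ ≪ λ₁ ≈ λ₂`. -/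
theorem stmt10 (n : ℕ) (hn : 2 ≤ n) :
    ∃ C : ℝ, 1 ≤ C ∧ ∀ (d lam0 lam1 lam2 : ℝ),
      (∃ k : ℤ, d = (2 : ℝ) ^ k) → (∃ k : ℤ, lam0 = (2 : ℝ) ^ k) →
      (∃ k : ℤ, lam1 = (2 : ℝ) ^ k) → (∃ k : ℤ, lam2 = (2 : ℝ) ^ k) →
      ∀ (τ τ' : ℝ) (ξ η : EuclideanSpace ℝ (Fin n)),
      lam1 / 2 ≤ ‖ξ‖ → ‖ξ‖ ≤ 2 * lam1 →
      lam2 / 2 ≤ ‖η‖ → ‖η‖ ≤ 2 * lam2 →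
      lam0 / 2 ≤ ‖ξ + η‖ → ‖ξ + η‖ ≤ 2 * lam0 →
      |(|τ| - ‖ξ‖)| ≤ d / C ^ 2 → |(|τ'| - ‖η‖)| ≤ d / C ^ 2 →
      d / 2 ≤ |(|τ + τ'| - ‖ξ + η‖)| → |(|τ + τ'| - ‖ξ + η‖)| ≤ 2 * d →
      C * min lam0 (min lam1 lam2) ≤ d →
      Real.sign τ = Real.sign τ' ∧
        1 / C ≤ angle ξ η ∧ angle ξ η ≤ C ∧
        max lam0 (max lam1 lam2) / C ≤ d ∧ d ≤ C * max lam0 (max lam1 lam2) ∧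
        2 * lam0 ≤ lam1 ∧ lam1 / C ≤ lam2 ∧ lam2 ≤ C * lam1 := by
  refine ⟨100, by norm_num, ?_⟩
  intro d lam0 lam1 lam2 hdD h0D h1D h2D τ τ' ξ η ha1 ha2 hb1 hb2 hc1 hc2 h1 h2 hlow hhigh hm
  have hd : 0 < d := by obtain ⟨k, hk⟩ := hdD; rw [hk]; positivity
  have h0p : 0 < lam0 := by obtain ⟨k, hk⟩ := h0D; rw [hk]; positivity
  have h1p : 0 < lam1 := by obtain ⟨k, hk⟩ := h1D; rw [hk]; positivity
  have h2p : 0 < lam2 := by obtain ⟨k, hk⟩ := h2D; rw [hk]; positivity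
  set a : ℝ := ‖ξ‖ with haA
  set b : ℝ := ‖η‖ with hbB
  set c : ℝ := ‖ξ + η‖ with hcC
  have ha0 : 0 < a := by linarith
  have hb0 : 0 < b := by linarith
  have hc0 : (0:ℝ) ≤ c := norm_nonneg _
  have tri1 : c ≤ a + b := norm_add_le ξ η
  have t2 : |a - b| ≤ c := by
    have := abs_norm_sub_norm_le ξ (-η)
    simpa [sub_neg_eq_add, norm_neg] using this
  have t2a : a - b ≤ c := (abs_le.mp t2).2
  have t2b : -c ≤ a - b := (abs_le.mp t2).1
  -- modulation bounds two-sided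
  have h1' := abs_le.mp h1
  have h2' := abs_le.mp h2
  -- Step 1: same sign
  have key : (0 < τ ∧ 0 < τ') ∨ (τ < 0 ∧ τ' < 0) := by
    by_contra hcon
    push_neg at hcon
    have hopp : |τ + τ'| = |(|τ| - |τ'|)| := by
      rcases lt_trichotomy τ 0 with hτ | hτ | hτ
      · rcases lt_trichotomy τ' 0 with hτ' | hτ' | hτ'
        · exact absurd (hcon.2 hτ) (not_le.mpr hτ')
        · subst hτ'; simp [abs_abs]
        · rw [abs_of_neg hτ, abs_of_pos hτ',
            show -τ - τ' = -(τ + τ') by ring, abs_neg]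
      · subst hτ; simp [abs_abs, abs_sub_comm]
      · rcases lt_trichotomy τ' 0 with hτ' | hτ' | hτ'
        · rw [abs_of_pos hτ, abs_of_neg hτ']; congr 1; ring
        · subst hτ'; simp [abs_abs]
        · exact absurd (hcon.1 hτ) (not_le.mpr hτ')
    have e1 : |(|τ| - |τ'|) - (a - b)| ≤ d / 100 ^ 2 + d / 100 ^ 2 := by
      calc |(|τ| - |τ'|) - (a - b)| = |((|τ| - a) - (|τ'| - b))| := by ring_nf
        _ ≤ |(|τ| - a)| + |(|τ'| - b)| := abs_sub _ _
        _ ≤ _ := add_le_add h1 h2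
    have e2 : |(|τ + τ'| - |a - b|)| ≤ d / 100 ^ 2 + d / 100 ^ 2 := by
      rw [hopp]
      exact (abs_abs_sub_abs_le_abs_sub _ _).trans e1
    have e2' := abs_le.mp e2
    have hminle : min lam0 (min lam1 lam2) ≤ d / 100 := by linarith
    have hcb : c - |a - b| ≤ 4 * min lam0 (min lam1 lam2) := by
      have b0 : c - |a - b| ≤ 4 * lam0 := by
        rcases abs_cases (a - b) with ⟨he, _⟩ | ⟨he, _⟩ <;> linarith
      have b1 : c - |a - b| ≤ 4 * lam1 := by
        rcases abs_cases (a - b) with ⟨he, _⟩ | ⟨he, _⟩ <;> linarith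
      have b2 : c - |a - b| ≤ 4 * lam2 := by
        rcases abs_cases (a - b) with ⟨he, _⟩ | ⟨he, _⟩ <;> linarith
      rcases min_cases lam1 lam2 with ⟨hm12, _⟩ | ⟨hm12, _⟩ <;>
        rcases min_cases lam0 (min lam1 lam2) with ⟨hm0, _⟩ | ⟨hm0, _⟩ <;>
          rw [hm0] <;> first | linarith | (rw [hm12]; linarith)
    have hmin0 : (0:ℝ) < min lam0 (min lam1 lam2) := by positivity
    rcases abs_cases (|τ + τ'| - c) with ⟨he, _⟩ | ⟨he, _⟩ <;> linarith
  have hsum : |τ + τ'| = |τ| + |τ'| := by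
    rcases key with ⟨h, h'⟩ | ⟨h, h'⟩
    · rw [abs_of_pos h, abs_of_pos h', abs_of_pos (by linarith)]
    · rw [abs_of_neg h, abs_of_neg h', abs_of_neg (by linarith)]; ring
  rw [hsum] at hlow hhigh
  -- S = a + b - c bounds
  have hS1 : d / 2 - 2 * (d / 100 ^ 2) ≤ a + b - c := by
    rcases abs_cases (|τ| + |τ'| - c) with ⟨he, _⟩ | ⟨he, _⟩ <;> linarith
  have hS2 : a + b - c ≤ 2 * d + 2 * (d / 100 ^ 2) := by
    rcases abs_cases (|τ| + |τ'| - c) with ⟨he, _⟩ | ⟨he, _⟩ <;> linarith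
  have hSa : a + b - c ≤ 4 * lam1 := by linarith
  have hSb : a + b - c ≤ 4 * lam2 := by linarith
  have hS4 : a + b - c ≤ 4 * min lam1 lam2 := by
    rcases min_cases lam1 lam2 with ⟨hm12, _⟩ | ⟨hm12, _⟩ <;> rw [hm12] <;> linarith
  have hm12a : min lam1 lam2 ≤ lam1 := min_le_left _ _
  have hm12b : min lam1 lam2 ≤ lam2 := min_le_right _ _
  -- lam0 is the small one
  have h12 : 12 * lam0 ≤ min lam1 lam2 := by
    rcases le_or_gt (min lam1 lam2) lam0 with hle | hlt
    · exfalso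
      rw [min_eq_right hle] at hm
      have : 0 < min lam1 lam2 := lt_min h1p h2p
      linarith
    · rw [min_eq_left hlt.le] at hm
      linarith
  have hl01 : 2 * lam0 ≤ lam1 := by linarith
  have hl02 : 12 * lam0 ≤ lam2 := by linarith
  have hl12 : lam1 ≤ 5 * lam2 := by linarith
  have hl21 : lam2 ≤ 5 * lam1 := by
    have t3 : b ≤ a + c := by linarith
    linarith
  -- max
  have hmax12 : max lam0 (max lam1 lam2) = max lam1 lam2 := by
    rw [max_eq_right]
    rcases max_cases lam1 lam2 with ⟨hM, _⟩ | ⟨hM, _⟩ <;> rw [hM] <;> linarith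
  have hSmax : max lam1 lam2 / 2 ≤ a + b - c := by
    rcases max_cases lam1 lam2 with ⟨hM, hM'⟩ | ⟨hM, hM'⟩ <;> rw [hM] <;> linarith
  have hdmax1 : max lam0 (max lam1 lam2) / 100 ≤ d := by
    rw [hmax12]; linarith [hSmax, hS2]
  have hdmax2 : d ≤ 100 * max lam0 (max lam1 lam2) := by
    rw [hmax12]
    rcases max_cases lam1 lam2 with ⟨hM, _⟩ | ⟨hM, _⟩ <;> rw [hM] <;> linarith
  -- angle
  have hip : (inner ℝ ξ η : ℝ) ≤ 3 / 4 * (a * b) := by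
    have hq : c ^ 2 = a ^ 2 + 2 * (inner ℝ ξ η : ℝ) + b ^ 2 := by
      rw [hcC, haA, hbB, norm_add_sq_real]
    have ha4 : a ≤ 4 * (a + b - c) := by
      rcases max_cases lam1 lam2 with ⟨hM, _⟩ | ⟨hM, hM'⟩ <;> linarith [hSmax]
    have hb4 : b ≤ 4 * (a + b - c) := by
      rcases max_cases lam1 lam2 with ⟨hM, hM'⟩ | ⟨hM, _⟩ <;> linarith [hSmax]
    nlinarith [mul_le_mul_of_nonneg_right ha4 (by positivity : (0:ℝ) ≤ a + b),
      mul_le_mul_of_nonneg_right hb4 (by positivity : (0:ℝ) ≤ a + b),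
      sq_nonneg (a - b), mul_le_mul_of_nonneg_left tri1 hc0]
  have hcos : Real.cos (angle ξ η) ≤ 3 / 4 := by
    rw [cos_angle, div_le_iff₀ (by positivity : (0:ℝ) < a * b)]
    linarith
  have hang1 : 1 / 100 ≤ angle ξ η := by
    by_contra hlt
    push_neg at hlt
    have h0 := angle_nonneg ξ η
    have := Real.one_sub_sq_div_two_le_cos (x := angle ξ η)
    nlinarith
  have hang2 : angle ξ η ≤ 100 := (angle_le_pi ξ η).trans (by linarith [Real.pi_le_four])
  refine ⟨?_, hang1, hang2, hdmax1, hdmax2, hl01, by linarith, by linarith⟩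
  rcases key with ⟨h, h'⟩ | ⟨h, h'⟩
  · rw [Real.sign_of_pos h, Real.sign_of_pos h']
  · rw [Real.sign_of_neg h, Real.sign_of_neg h']
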